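/- Let G be a finite group and H ≤ G a subgroup. Then every irreducible complex representation ρ of G satisfies dim Hom_H(ρ|_H, ℂ) ≤ 1 if and only if the algebra of bi-H-invariant functions ℂ[G]^{H×H} (under convolution) is commutative. -/

import Mathlib

open scoped BigOperators

noncomputable section

/-- The space of `H`-invariant linear functionals on a representation `ρ` of `G`,
i.e. `Hom_H(ρ|_H, ℂ)` where `ℂ` is the trivial representation of `H`. -/
def invFunctionals {G : Type} [Group G] {V : Type} [AddCommGroup V] [Module ℂ V]
    (H : Subgroup G) (ρ : Representation ℂ G V) : Submodule ℂ (V →ₗ[ℂ] ℂ) where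
  carrier := {φ | ∀ h ∈ H, ∀ v : V, φ (ρ h v) = φ v}
  add_mem' := by
    intro a b ha hb h hh v
    simp [ha h hh v, hb h hh v]
  zero_mem' := by intro h hh v; simp
  smul_mem' := by
    intro c a ha h hh v
    simp [ha h hh v]

/-- Convolution product on `ℂ[G]` for a finite group `G`. -/
def conv {G : Type} [Group G] [Fintype G] (f₁ f₂ : G → ℂ) : G → ℂ :=
  fun x => ∑ g : G, f₁ (x * g⁻¹) * f₂ g

/-- A function on `G` is bi-`H`-invariant. -/
def BiInv {G : Type} [Group G] (H : Subgroup G) (f : G → ℂ) : Prop :=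
  ∀ h₁ ∈ H, ∀ h₂ ∈ H, ∀ g : G, f (h₁ * g * h₂) = f g

namespace GelfandAux

variable {G : Type} [Group G] {V : Type} [AddCommGroup V] [Module ℂ V]

/-- Averaging operator over the subgroup `H`. -/
def avgH (H : Subgroup G) [Fintype ↥H] (ρ : Representation ℂ G V) : V →ₗ[ℂ] V :=
  (Fintype.card ↥H : ℂ)⁻¹ • ∑ h : ↥H, (ρ (h : G) : V →ₗ[ℂ] V)

variable (H : Subgroup G) [Fintype ↥H] (ρ : Representation ℂ G V)

lemma avgH_apply (v : V) :
    avgH H ρ v = (Fintype.card ↥H : ℂ)⁻¹ • ∑ h : ↥H, ρ (h : G) v := by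
  simp [avgH, LinearMap.sum_apply]

lemma rho_avgH {h : G} (hh : h ∈ H) (v : V) : ρ h (avgH H ρ v) = avgH H ρ v := by
  simp only [avgH_apply, map_smul, map_sum]
  congr 1
  exact Fintype.sum_equiv (Equiv.mulLeft (⟨h, hh⟩ : ↥H))
    (fun x : ↥H => ρ h (ρ (x : G) v)) (fun x : ↥H => ρ (x : G) v)
    (fun x => by
      show ρ h (ρ (x : G) v) = ρ (((⟨h, hh⟩ * x : ↥H) : ↥H) : G) v
      rw [Subgroup.coe_mul, map_mul, Module.End.mul_apply])

lemma avgH_rho {h : G} (hh : h ∈ H) (v : V) : avgH H ρ (ρ h v) = avgH H ρ v := by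
  simp only [avgH_apply]
  congr 1
  exact Fintype.sum_equiv (Equiv.mulRight (⟨h, hh⟩ : ↥H))
    (fun x : ↥H => ρ (x : G) (ρ h v)) (fun x : ↥H => ρ (x : G) v)
    (fun x => by
      show ρ (x : G) (ρ h v) = ρ (((x * ⟨h, hh⟩ : ↥H) : ↥H) : G) v
      rw [Subgroup.coe_mul, map_mul, Module.End.mul_apply])

lemma avgH_fixed {v : V} (hv : ∀ h ∈ H, ρ h v = v) : avgH H ρ v = v := by
  rw [avgH_apply]
  have : ∀ x : ↥H, ρ (x : G) v = v := fun x => hv x x.2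
  rw [Finset.sum_congr rfl (fun x _ => this x), Finset.sum_const, Finset.card_univ,
    ← Nat.cast_smul_eq_nsmul ℂ, smul_smul, inv_mul_cancel₀, one_smul]
  exact_mod_cast Fintype.card_ne_zero

lemma avgH_fixes {h : G} (hh : h ∈ H) (v : V) : ρ h (avgH H ρ v) = avgH H ρ v :=
  rho_avgH H ρ hh v

lemma invFunctional_avgH {φ : V →ₗ[ℂ] ℂ} (hφ : φ ∈ invFunctionals H ρ) (v : V) :
    φ (avgH H ρ v) = φ v := by
  rw [avgH_apply, map_smul, map_sum]
  have : ∀ x : ↥H, φ (ρ (x : G) v) = φ v := fun x => hφ x x.2 v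
  rw [Finset.sum_congr rfl (fun x _ => this x), Finset.sum_const, Finset.card_univ,
    smul_eq_mul, nsmul_eq_mul, ← mul_assoc, inv_mul_cancel₀, one_mul]
  exact_mod_cast Fintype.card_ne_zero


section Simple

variable {ρ : Representation ℂ G V}

lemma asAlgebraHom_mem {W : Submodule ℂ V} (hW : ∀ (g : G) (w : V), w ∈ W → ρ g w ∈ W)
    (r : MonoidAlgebra ℂ G) {x : V} (hx : x ∈ W) : ρ.asAlgebraHom r x ∈ W := by
  induction r using MonoidAlgebra.induction_linear with
  | zero => simp [W.zero_mem]
  | add f g hf hg => rw [map_add, LinearMap.add_apply]; exact W.add_mem hf hg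
  | single g c =>
      rw [Representation.asAlgebraHom_single, LinearMap.smul_apply]
      exact W.smul_mem _ (hW g x hx)

lemma invariant_eq_top (hsimp : IsSimpleModule (MonoidAlgebra ℂ G) ρ.asModule)
    (W : Submodule ℂ V) (hW : ∀ (g : G) (w : V), w ∈ W → ρ g w ∈ W) (hne : W ≠ ⊥) : W = ⊤ := by
  let W' : Submodule (MonoidAlgebra ℂ G) ρ.asModule :=
    { carrier := (W : Set V)
      add_mem' := fun ha hb => W.add_mem ha hb
      zero_mem' := W.zero_mem
      smul_mem' := by
        intro r x hx
        have h1 : (r • x : ρ.asModule) = ρ.asAlgebraHom r x := rfl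
        show (r • x : ρ.asModule) ∈ (W : Set V)
        rw [h1]
        exact asAlgebraHom_mem hW r hx }
  rcases hsimp.toIsSimpleOrder.eq_bot_or_eq_top W' with h | h
  · exfalso
    apply hne
    rw [eq_bot_iff]
    intro x hx
    have : (x : ρ.asModule) ∈ W' := hx
    rw [h] at this
    exact (Submodule.mem_bot (M := ρ.asModule) _).1 this
  · rw [eq_top_iff]
    intro x _
    have : (x : ρ.asModule) ∈ W' := by rw [h]; trivial
    exact this

lemma nontrivial_of_simple (hsimp : IsSimpleModule (MonoidAlgebra ℂ G) ρ.asModule) :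
    Nontrivial V := by
  have := IsSimpleModule.nontrivial (R := MonoidAlgebra ℂ G) (M := ρ.asModule)
  exact this

lemma finiteDimensional_of_simple [Fintype G]
    (hsimp : IsSimpleModule (MonoidAlgebra ℂ G) ρ.asModule) :
    FiniteDimensional ℂ V := by
  haveI : FiniteDimensional ℂ (MonoidAlgebra ℂ G) :=
    Module.Finite.equiv ((MonoidAlgebra.coeffLinearEquiv ℂ).trans (Finsupp.linearEquivFunOnFinite ℂ ℂ G)).symm
  haveI := nontrivial_of_simple hsimp
  obtain ⟨v, hv⟩ := exists_ne (0 : V)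
  let v' : ρ.asModule := v
  let ℓ : MonoidAlgebra ℂ G →ₗ[ℂ] V :=
    { toFun := fun r => ρ.asAlgebraHom r v
      map_add' := fun a b => by simp [map_add]
      map_smul' := fun c a => by simp [map_smul] }
  have hsurj : Function.Surjective ℓ := by
    intro x
    let x' : ρ.asModule := x
    have htop : (Submodule.span (MonoidAlgebra ℂ G) {v'}) = ⊤ := by
      rcases hsimp.toIsSimpleOrder.eq_bot_or_eq_top (Submodule.span (MonoidAlgebra ℂ G) {v'}) with h | h
      · exfalso
        apply hv
        have : v' ∈ Submodule.span (MonoidAlgebra ℂ G) {v'} :=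
          Submodule.mem_span_singleton_self _
        rw [h] at this
        exact (Submodule.mem_bot (M := ρ.asModule) _).1 this
      · exact h
    have hx : x' ∈ Submodule.span (MonoidAlgebra ℂ G) {v'} := by
      rw [htop]; trivial
    obtain ⟨r, hr⟩ := Submodule.mem_span_singleton.1 hx
    exact ⟨r, hr⟩
  exact Module.Finite.of_surjective ℓ hsurj

lemma schur_scalar [Fintype G] (hsimp : IsSimpleModule (MonoidAlgebra ℂ G) ρ.asModule)
    (T : Module.End ℂ V) (hT : ∀ g : G, ρ g * T = T * ρ g) :
    ∃ c : ℂ, ∀ w : V, T w = c • w := by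
  haveI := nontrivial_of_simple hsimp
  haveI := finiteDimensional_of_simple hsimp
  obtain ⟨c, hc⟩ := Module.End.exists_eigenvalue T
  refine ⟨c, ?_⟩
  have heq : Module.End.eigenspace T c = ⊤ := by
    apply invariant_eq_top hsimp
    · intro g w hw
      rw [Module.End.mem_eigenspace_iff] at hw ⊢
      rw [← Module.End.mul_apply, ← hT, Module.End.mul_apply, hw, map_smul]
    · exact hc
  intro w
  have : w ∈ Module.End.eigenspace T c := by rw [heq]; trivial
  exact Module.End.mem_eigenspace_iff.1 this

end Simple

section Dual

variable {W : Type} [AddCommGroup W] [Module ℂ W]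

lemma eq_smul_of_ker_le (φ₀ φ : W →ₗ[ℂ] ℂ) (h : LinearMap.ker φ₀ ≤ LinearMap.ker φ) :
    ∃ c : ℂ, φ = c • φ₀ := by
  by_cases h0 : φ₀ = 0
  · refine ⟨0, ?_⟩
    ext v
    have : v ∈ LinearMap.ker φ := h (by simp [h0])
    simpa using this
  · have : ∃ u, φ₀ u ≠ 0 := by
      by_contra hc
      push_neg at hc
      exact h0 (LinearMap.ext fun v => by simpa using hc v)
    obtain ⟨u, hu⟩ := this
    refine ⟨φ u * (φ₀ u)⁻¹, ?_⟩
    ext v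
    have hker : v - ((φ₀ v) * (φ₀ u)⁻¹) • u ∈ LinearMap.ker φ₀ := by
      simp only [LinearMap.mem_ker, map_sub, map_smul, smul_eq_mul]
      field_simp
      simp
    have := h hker
    simp only [LinearMap.mem_ker, map_sub, map_smul, smul_eq_mul] at this
    have hv := sub_eq_zero.1 this
    simp only [LinearMap.smul_apply, smul_eq_mul]
    rw [hv]
    ring

lemma exists_dual_of_not_mem_span {u w : W} (hw : w ∉ Submodule.span ℂ {u}) :
    ∃ ψ : W →ₗ[ℂ] ℂ, ψ u = 0 ∧ ψ w = 1 := by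
  let p := Submodule.span ℂ {u}
  have hmk : Submodule.Quotient.mk (p := p) w ≠ 0 := by
    simpa [Submodule.Quotient.mk_eq_zero] using hw
  have : ¬∀ ψ : Module.Dual ℂ (W ⧸ p), ψ (Submodule.Quotient.mk w) = 0 := by
    rw [Module.forall_dual_apply_eq_zero_iff]
    exact hmk
  push_neg at this
  obtain ⟨g, hg⟩ := this
  refine ⟨(g (Submodule.Quotient.mk w))⁻¹ • (g.comp p.mkQ), ?_, ?_⟩
  · have : p.mkQ u = 0 := by
      rw [Submodule.mkQ_apply, Submodule.Quotient.mk_eq_zero]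
      exact Submodule.mem_span_singleton_self _
    simp [this]
  · simp [Submodule.mkQ_apply, inv_mul_cancel₀ hg]

end Dual

section Rank

variable (H : Subgroup G) [Fintype ↥H] (ρ : Representation ℂ G V)

lemma false_of_two_fixed {u w : V}
    (hu : ∀ h ∈ H, ρ h u = u) (hw : ∀ h ∈ H, ρ h w = w)
    (hu0 : u ≠ 0) (hws : w ∉ Submodule.span ℂ {u})
    (hrank : Module.rank ℂ (invFunctionals H ρ) ≤ 1) : False := by
  have hus : u ∉ Submodule.span ℂ {w} := by
    intro hmem
    obtain ⟨a, ha⟩ := Submodule.mem_span_singleton.1 hmem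
    have ha0 : a ≠ 0 := by rintro rfl; rw [zero_smul] at ha; exact hu0 ha.symm
    apply hws
    rw [Submodule.mem_span_singleton]
    exact ⟨a⁻¹, by rw [← ha, smul_smul, inv_mul_cancel₀ ha0, one_smul]⟩
  obtain ⟨ψ₂, hψ₂u, hψ₂w⟩ := exists_dual_of_not_mem_span hws
  obtain ⟨ψ₁, hψ₁w, hψ₁u⟩ := exists_dual_of_not_mem_span hus
  set φ₁ := ψ₁.comp (avgH H ρ) with hφ₁def
  set φ₂ := ψ₂.comp (avgH H ρ) with hφ₂def
  have hm : ∀ ψ : V →ₗ[ℂ] ℂ, ψ.comp (avgH H ρ) ∈ invFunctionals H ρ := by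
    intro ψ h hh v
    simp only [LinearMap.comp_apply]
    rw [avgH_rho H ρ hh]
  have h1u : φ₁ u = 1 := by
    simp only [hφ₁def, LinearMap.comp_apply, avgH_fixed H ρ hu]; exact hψ₁u
  have h1w : φ₁ w = 0 := by
    simp only [hφ₁def, LinearMap.comp_apply, avgH_fixed H ρ hw]; exact hψ₁w
  have h2u : φ₂ u = 0 := by
    simp only [hφ₂def, LinearMap.comp_apply, avgH_fixed H ρ hu]; exact hψ₂u
  have h2w : φ₂ w = 1 := by
    simp only [hφ₂def, LinearMap.comp_apply, avgH_fixed H ρ hw]; exact hψ₂w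
  have hli2 : LinearIndependent ℂ ![φ₁, φ₂] := by
    rw [linearIndependent_fin2]
    simp only [Matrix.cons_val_one, Matrix.head_cons, Matrix.cons_val_zero]
    constructor
    · intro h
      rw [h] at h2w
      simp at h2w
    · intro a h
      have h1 := DFunLike.congr_fun h u
      rw [h1u, LinearMap.smul_apply, h2u, smul_eq_mul, mul_zero] at h1
      norm_num at h1
  have hli : LinearIndependent ℂ
      ![(⟨φ₁, hm ψ₁⟩ : invFunctionals H ρ), ⟨φ₂, hm ψ₂⟩] := by
    apply LinearIndependent.of_comp (invFunctionals H ρ).subtype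
    have heq : ((invFunctionals H ρ).subtype ∘ ![⟨φ₁, hm ψ₁⟩, ⟨φ₂, hm ψ₂⟩]) = ![φ₁, φ₂] := by
      funext i; fin_cases i <;> rfl
    rw [heq]
    exact hli2
  have h2 := hli.cardinal_le_rank
  rw [Cardinal.mk_fin] at h2
  have hfin : (2 : Cardinal) ≤ 1 := le_trans (by exact_mod_cast h2) hrank
  norm_num at hfin

lemma exists_spanning_fixed
    (hrank : Module.rank ℂ (invFunctionals H ρ) ≤ 1) :
    ∃ u : V, ∀ w : V, (∀ h ∈ H, ρ h w = w) → ∃ c : ℂ, w = c • u := by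
  by_cases hex : ∃ u : V, u ≠ 0 ∧ ∀ h ∈ H, ρ h u = u
  · obtain ⟨u, hu0, hufix⟩ := hex
    refine ⟨u, fun w hwfix => ?_⟩
    by_cases hws : w ∈ Submodule.span ℂ {u}
    · obtain ⟨c, hc⟩ := Submodule.mem_span_singleton.1 hws
      exact ⟨c, hc.symm⟩
    · exact (false_of_two_fixed H ρ hufix hwfix hu0 hws hrank).elim
  · push_neg at hex
    refine ⟨0, fun w hwfix => ?_⟩
    by_cases hw0 : w = 0
    · exact ⟨0, by simp [hw0]⟩
    · obtain ⟨h, hh, hne⟩ := hex w hw0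
      exact absurd (hwfix h hh) hne

end Rank

section Backward

variable [Fintype G] {ρ : Representation ℂ G V}

lemma trace_smulRight' [FiniteDimensional ℂ V] (φ : V →ₗ[ℂ] ℂ) (v : V) :
    LinearMap.trace ℂ V (φ.smulRight v) = φ v := by
  let b := Module.finBasis ℂ V
  rw [LinearMap.trace_eq_matrix_trace ℂ b, Matrix.trace]
  have hdiag : ∀ i, (LinearMap.toMatrix b b (φ.smulRight v)).diag i = φ (b i) * b.repr v i := by
    intro i
    rw [Matrix.diag_apply, LinearMap.toMatrix_apply, LinearMap.smulRight_apply, map_smul,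
      Finsupp.smul_apply, smul_eq_mul]
  rw [Finset.sum_congr rfl (fun i _ => hdiag i)]
  calc ∑ i, φ (b i) * b.repr v i = φ (∑ i, b.repr v i • b i) := by
        rw [map_sum]
        exact Finset.sum_congr rfl (fun i _ => by rw [map_smul, smul_eq_mul, mul_comm])
    _ = φ v := by rw [b.sum_repr]

lemma tcomm (v : V) (ψ : V →ₗ[ℂ] ℂ) (x : G) :
    ρ x * (∑ g : G, ρ g⁻¹ * (ψ.smulRight v * ρ g)) =
      (∑ g : G, ρ g⁻¹ * (ψ.smulRight v * ρ g)) * ρ x := by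
  rw [Finset.mul_sum, Finset.sum_mul]
  refine Fintype.sum_equiv (Equiv.mulRight x⁻¹) _ _ (fun g => ?_)
  show ρ x * (ρ g⁻¹ * (ψ.smulRight v * ρ g)) =
    ρ (g * x⁻¹)⁻¹ * (ψ.smulRight v * ρ (g * x⁻¹)) * ρ x
  have hcancel : ρ x⁻¹ * ρ x = 1 := by rw [← map_mul, inv_mul_cancel, map_one]
  rw [mul_inv_rev, inv_inv, map_mul, map_mul]
  simp only [mul_assoc]
  rw [hcancel, mul_one]

lemma conv_matrix_coeff (v : V) (ψ₁ ψ₂ : V →ₗ[ℂ] ℂ) (d : ℂ)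
    (hT : ∀ w : V, (∑ g : G, ρ g⁻¹ * (ψ₂.smulRight v * ρ g)) w = d • w) (x : G) :
    conv (fun g => ψ₁ (ρ g v)) (fun g => ψ₂ (ρ g v)) x = d * ψ₁ (ρ x v) := by
  have hterm : ∀ g : G, ψ₁ (ρ (x * g⁻¹) v) * ψ₂ (ρ g v)
      = ψ₁ (ρ x ((ρ g⁻¹ * (ψ₂.smulRight v * ρ g)) v)) := by
    intro g
    simp only [map_mul, Module.End.mul_apply, LinearMap.smulRight_apply, map_smul, smul_eq_mul]
    ring
  calc conv (fun g => ψ₁ (ρ g v)) (fun g => ψ₂ (ρ g v)) x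
      = ∑ g : G, ψ₁ (ρ x ((ρ g⁻¹ * (ψ₂.smulRight v * ρ g)) v)) :=
        Finset.sum_congr rfl (fun g _ => hterm g)
    _ = ψ₁ (ρ x ((∑ g : G, ρ g⁻¹ * (ψ₂.smulRight v * ρ g)) v)) := by
        rw [LinearMap.sum_apply, map_sum, map_sum]
    _ = d * ψ₁ (ρ x v) := by rw [hT v, map_smul, map_smul, smul_eq_mul]

lemma rank_le_one_of_comm (H : Subgroup G)
    (hcomm : ∀ f₁ f₂ : G → ℂ, BiInv H f₁ → BiInv H f₂ → conv f₁ f₂ = conv f₂ f₁)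
    (hsimp : IsSimpleModule (MonoidAlgebra ℂ G) ρ.asModule) :
    Module.rank ℂ (invFunctionals H ρ) ≤ 1 := by
  haveI : Fintype ↥H := Fintype.ofFinite _
  haveI := nontrivial_of_simple hsimp
  haveI := finiteDimensional_of_simple hsimp
  rw [rank_submodule_le_one_iff']
  by_cases hbot : invFunctionals H ρ = ⊥
  · exact ⟨0, by rw [hbot]; exact bot_le⟩
  obtain ⟨φ₀, hφ₀mem, hφ₀⟩ := Submodule.exists_mem_ne_zero_of_ne_bot hbot
  refine ⟨φ₀, fun φ hφmem => ?_⟩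
  by_cases hker : LinearMap.ker φ₀ ≤ LinearMap.ker φ
  · obtain ⟨c, hc⟩ := eq_smul_of_ker_le φ₀ φ hker
    rw [Submodule.mem_span_singleton]
    exact ⟨c, hc.symm⟩
  exfalso
  obtain ⟨w, hw0, hwne⟩ := SetLike.not_le_iff_exists.1 hker
  have hw0' : φ₀ w = 0 := hw0
  have hwne' : φ w ≠ 0 := fun h => hwne (LinearMap.mem_ker.2 h)
  have hφPw : φ (avgH H ρ w) = φ w := invFunctional_avgH H ρ hφmem w
  have hφ₀Pw : φ₀ (avgH H ρ w) = φ₀ w := invFunctional_avgH H ρ hφ₀mem w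
  set v := (φ w)⁻¹ • avgH H ρ w with hv
  have hfix : ∀ h ∈ H, ρ h v = v := fun h hh => by
    rw [hv, map_smul, rho_avgH H ρ hh]
  have hφv : φ v = 1 := by
    rw [hv, map_smul, hφPw, smul_eq_mul, inv_mul_cancel₀ hwne']
  have hφ₀v : φ₀ v = 0 := by rw [hv, map_smul, hφ₀Pw, hw0', smul_zero]
  have hv0 : v ≠ 0 := fun h => by rw [h, map_zero] at hφv; norm_num at hφv
  have hbi : ∀ (ψ : V →ₗ[ℂ] ℂ), ψ ∈ invFunctionals H ρ → BiInv H (fun g => ψ (ρ g v)) := by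
    intro ψ hψ h₁ hh₁ h₂ hh₂ g
    simp only [map_mul, Module.End.mul_apply]
    rw [hfix h₂ hh₂, hψ h₁ hh₁]
  obtain ⟨c, hc⟩ := schur_scalar hsimp
    (∑ g : G, ρ g⁻¹ * (φ.smulRight v * ρ g)) (fun x => tcomm v φ x)
  obtain ⟨c', hc'⟩ := schur_scalar hsimp
    (∑ g : G, ρ g⁻¹ * (φ₀.smulRight v * ρ g)) (fun x => tcomm v φ₀ x)
  have hconv1 : ∀ x, conv (fun g => φ₀ (ρ g v)) (fun g => φ (ρ g v)) x = c * φ₀ (ρ x v) :=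
    fun x => conv_matrix_coeff v φ₀ φ c hc x
  have hconv2 : ∀ x, conv (fun g => φ (ρ g v)) (fun g => φ₀ (ρ g v)) x = c' * φ (ρ x v) :=
    fun x => conv_matrix_coeff v φ φ₀ c' hc' x
  have heq := hcomm _ _ (hbi φ₀ hφ₀mem) (hbi φ hφmem)
  -- evaluate at 1 : c' = 0
  have h1 : c * φ₀ v = c' * φ v := by
    have := congrFun heq 1
    rw [hconv1 1, hconv2 1, map_one] at this
    simpa using this
  rw [hφ₀v, hφv, mul_zero, mul_one] at h1
  -- c ≠ 0 via trace
  have hcne : c ≠ 0 := by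
    have hTr : LinearMap.trace ℂ V (∑ g : G, ρ g⁻¹ * (φ.smulRight v * ρ g))
        = (Fintype.card G : ℂ) * φ v := by
      rw [map_sum]
      have : ∀ g : G, LinearMap.trace ℂ V (ρ g⁻¹ * (φ.smulRight v * ρ g))
          = LinearMap.trace ℂ V (φ.smulRight v) := by
        intro g
        rw [LinearMap.trace_mul_comm, mul_assoc, ← map_mul, mul_inv_cancel, map_one, mul_one]
      rw [Finset.sum_congr rfl (fun g _ => this g), trace_smulRight' φ v, Finset.sum_const,
        Finset.card_univ, nsmul_eq_mul]
    have hText : (∑ g : G, ρ g⁻¹ * (φ.smulRight v * ρ g)) = c • (LinearMap.id : V →ₗ[ℂ] V) :=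
      LinearMap.ext fun w => by rw [hc w]; rfl
    rw [hText, map_smul, LinearMap.trace_id, hφv, mul_one] at hTr
    intro hc0
    rw [hc0, zero_smul] at hTr
    have : (Fintype.card G : ℂ) ≠ 0 := by
      exact_mod_cast Fintype.card_ne_zero
    exact this hTr.symm
  -- φ₀ vanishes on the orbit
  have horb : ∀ x : G, φ₀ (ρ x v) = 0 := by
    intro x
    have := congrFun heq x
    rw [hconv1 x, hconv2 x, ← h1, zero_mul] at this
    exact (mul_eq_zero.1 this).resolve_left hcne
  -- orbit spans
  have hM : Submodule.span ℂ (Set.range fun g : G => ρ g v) = ⊤ := by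
    apply invariant_eq_top hsimp
    · intro g w hwmem
      induction hwmem using Submodule.span_induction with
      | mem y hy =>
          obtain ⟨g', rfl⟩ := hy
          apply Submodule.subset_span
          refine ⟨g * g', ?_⟩
          show ρ (g * g') v = ρ g (ρ g' v)
          rw [map_mul, Module.End.mul_apply]
      | zero => rw [map_zero]; exact Submodule.zero_mem _
      | add a b _ _ ha hb => rw [map_add]; exact Submodule.add_mem _ ha hb
      | smul a x _ hx => rw [map_smul]; exact Submodule.smul_mem _ a hx
    · intro hbot'
      apply hv0
      have hvmem : v ∈ Submodule.span ℂ (Set.range fun g : G => ρ g v) :=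
        Submodule.subset_span ⟨1, by show ρ (1 : G) v = v; rw [map_one, Module.End.one_apply]⟩
      rw [hbot'] at hvmem
      simpa using hvmem
  apply hφ₀
  ext w
  have hwmem : w ∈ Submodule.span ℂ (Set.range fun g : G => ρ g v) := by rw [hM]; trivial
  have hle : Submodule.span ℂ (Set.range fun g : G => ρ g v) ≤ LinearMap.ker φ₀ := by
    rw [Submodule.span_le]
    rintro y ⟨g, rfl⟩
    exact LinearMap.mem_ker.2 (horb g)
  simpa using hle hwmem

end Backward

section Forward

variable [Fintype G]

open MonoidAlgebra

/-- The representation of `G` on a left ideal of the group algebra. -/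
def subRep (S : Submodule (MonoidAlgebra ℂ G) (MonoidAlgebra ℂ G)) :
    Representation ℂ G ↥S where
  toFun g :=
    { toFun := fun s => ⟨MonoidAlgebra.single g 1 * (s : MonoidAlgebra ℂ G),
        by simpa [smul_eq_mul] using S.smul_mem (MonoidAlgebra.single g 1) s.2⟩
      map_add' := fun a b => by
        apply Subtype.ext
        simp [mul_add]
      map_smul' := fun c a => by
        apply Subtype.ext
        simp [mul_smul_comm] }
  map_one' := by
    apply LinearMap.ext
    intro s
    apply Subtype.ext
    show (MonoidAlgebra.single (1 : G) (1 : ℂ) : MonoidAlgebra ℂ G) * (s : MonoidAlgebra ℂ G) = s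
    rw [← MonoidAlgebra.one_def, one_mul]
  map_mul' := fun g₁ g₂ => by
    apply LinearMap.ext
    intro s
    apply Subtype.ext
    show (MonoidAlgebra.single (g₁ * g₂) (1 : ℂ) : MonoidAlgebra ℂ G) * (s : MonoidAlgebra ℂ G) =
      MonoidAlgebra.single g₁ 1 * (MonoidAlgebra.single g₂ 1 * (s : MonoidAlgebra ℂ G))
    rw [← mul_assoc, MonoidAlgebra.single_mul_single, mul_one]

lemma subRep_asAlgebraHom (S : Submodule (MonoidAlgebra ℂ G) (MonoidAlgebra ℂ G))
    (r : MonoidAlgebra ℂ G) (y : ↥S) : (subRep S).asAlgebraHom r y = r • y := by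
  induction r using MonoidAlgebra.induction_linear with
  | zero => rw [map_zero, zero_smul]; rfl
  | add f g hf hg => rw [map_add, LinearMap.add_apply, hf, hg, add_smul]
  | single g c =>
      rw [Representation.asAlgebraHom_single]
      apply Subtype.ext
      show c • (MonoidAlgebra.single g 1 * (y : MonoidAlgebra ℂ G)) =
        (MonoidAlgebra.single g c : MonoidAlgebra ℂ G) * (y : MonoidAlgebra ℂ G)
      rw [← smul_mul_assoc, MonoidAlgebra.smul_single, smul_eq_mul, mul_one]

/-- `asModule` of `subRep S` is the module `S` itself. -/
def subRepEquiv (S : Submodule (MonoidAlgebra ℂ G) (MonoidAlgebra ℂ G)) :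
    (subRep S).asModule ≃ₗ[MonoidAlgebra ℂ G] ↥S where
  toFun x := (subRep S).asModuleEquiv x
  invFun y := (subRep S).asModuleEquiv.symm y
  left_inv x := by simp
  right_inv y := by simp
  map_add' a b := by simp
  map_smul' r x := by
    show (subRep S).asModuleEquiv (r • x) = r • ((subRep S).asModuleEquiv x)
    rw [Representation.asModuleEquiv_map_smul, subRep_asAlgebraHom]

lemma subRep_simple (S : Submodule (MonoidAlgebra ℂ G) (MonoidAlgebra ℂ G))
    (hS : IsSimpleModule (MonoidAlgebra ℂ G) S) :
    IsSimpleModule (MonoidAlgebra ℂ G) (subRep S).asModule := by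
  haveI := hS
  exact IsSimpleModule.congr (subRepEquiv S)

lemma key_comm (H : Subgroup G)
    (hmult : ∀ (V : Type) [AddCommGroup V] [Module ℂ V] (ρ : Representation ℂ G V),
        IsSimpleModule (MonoidAlgebra ℂ G) ρ.asModule →
        Module.rank ℂ (invFunctionals H ρ) ≤ 1)
    (f₁ f₂ : MonoidAlgebra ℂ G)
    (h₁l : ∀ h ∈ H, (MonoidAlgebra.single h 1 : MonoidAlgebra ℂ G) * f₁ = f₁)
    (h₁r : ∀ h ∈ H, f₁ * (MonoidAlgebra.single h 1 : MonoidAlgebra ℂ G) = f₁)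
    (h₂l : ∀ h ∈ H, (MonoidAlgebra.single h 1 : MonoidAlgebra ℂ G) * f₂ = f₂)
    (h₂r : ∀ h ∈ H, f₂ * (MonoidAlgebra.single h 1 : MonoidAlgebra ℂ G) = f₂)
    (S : Submodule (MonoidAlgebra ℂ G) (MonoidAlgebra ℂ G))
    (hS : IsSimpleModule (MonoidAlgebra ℂ G) S)
    (x : MonoidAlgebra ℂ G) (hx : x ∈ S) : f₁ * (f₂ * x) = f₂ * (f₁ * x) := by
  haveI : Fintype ↥H := Fintype.ofFinite _
  obtain ⟨u, hu⟩ := exists_spanning_fixed H (subRep S) (hmult ↥S (subRep S) (subRep_simple S hS))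
  set s : ↥S := ⟨x, hx⟩ with hs
  -- left multiplication by a left-invariant element lands in the fixed subspace
  have hfixed : ∀ (f : MonoidAlgebra ℂ G),
      (∀ h ∈ H, (MonoidAlgebra.single h 1 : MonoidAlgebra ℂ G) * f = f) →
      ∀ y : ↥S, ∀ h ∈ H, (subRep S) h (f • y) = f • y := by
    intro f hf y h hh
    apply Subtype.ext
    show (MonoidAlgebra.single h 1 : MonoidAlgebra ℂ G) * (f * (y : MonoidAlgebra ℂ G))
      = f * (y : MonoidAlgebra ℂ G)
    rw [← mul_assoc, hf h hh]
  -- left multiplication by a right-invariant element is unchanged by averaging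
  have havg : ∀ (f : MonoidAlgebra ℂ G),
      (∀ h ∈ H, f * (MonoidAlgebra.single h 1 : MonoidAlgebra ℂ G) = f) →
      ∀ y : ↥S, f • (avgH H (subRep S) y) = f • y := by
    intro f hf y
    have hterm : ∀ h : ↥H, f • ((subRep S) ((h : ↥H) : G) y) = f • y := by
      intro h
      apply Subtype.ext
      show f * ((MonoidAlgebra.single ((h : ↥H) : G) 1 : MonoidAlgebra ℂ G) * (y : MonoidAlgebra ℂ G))
        = f * (y : MonoidAlgebra ℂ G)
      rw [← mul_assoc, hf _ h.2]
    rw [avgH_apply]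
    rw [smul_comm f ((Fintype.card ↥H : ℂ))⁻¹]
    rw [Finset.smul_sum]
    rw [Finset.sum_congr rfl (fun h _ => hterm h)]
    rw [Finset.sum_const, Finset.card_univ]
    rw [← Nat.cast_smul_eq_nsmul ℂ]
    rw [smul_smul, inv_mul_cancel₀, one_smul]
    exact_mod_cast Fintype.card_ne_zero
  obtain ⟨α, hα⟩ := hu (avgH H (subRep S) s) (fun h hh => avgH_fixes H (subRep S) hh s)
  obtain ⟨β₁, hβ₁⟩ := hu (f₁ • u) (fun h hh => hfixed f₁ h₁l u h hh)
  obtain ⟨β₂, hβ₂⟩ := hu (f₂ • u) (fun h hh => hfixed f₂ h₂l u h hh)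
  have h2s : f₂ • s = α • (β₂ • u) := by
    rw [← havg f₂ h₂r s, hα, smul_comm, hβ₂]
  have h1s : f₁ • s = α • (β₁ • u) := by
    rw [← havg f₁ h₁r s, hα, smul_comm, hβ₁]
  have hmain : f₁ • (f₂ • s) = f₂ • (f₁ • s) := by
    rw [h2s, h1s, smul_comm f₁ α, smul_comm f₁ β₂, smul_comm f₂ α, smul_comm f₂ β₁,
      hβ₁, hβ₂, smul_comm β₂ β₁]
  have := congrArg (fun y : ↥S => (y : MonoidAlgebra ℂ G)) hmain
  simpa [mul_assoc] using this

lemma mul_apply_conv (F₁ F₂ : MonoidAlgebra ℂ G) (x : G) :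
    (F₁ * F₂).coeff x = ∑ g : G, F₁.coeff (x * g⁻¹) * F₂.coeff g := by
  rw [MonoidAlgebra.coeff_mul_apply_right, Finsupp.sum_fintype]
  intro i
  rw [mul_zero]

lemma comm_of_mult (H : Subgroup G)
    (hmult : ∀ (V : Type) [AddCommGroup V] [Module ℂ V] (ρ : Representation ℂ G V),
        IsSimpleModule (MonoidAlgebra ℂ G) ρ.asModule →
        Module.rank ℂ (invFunctionals H ρ) ≤ 1)
    (f₁ f₂ : G → ℂ) (hb₁ : BiInv H f₁) (hb₂ : BiInv H f₂) :
    conv f₁ f₂ = conv f₂ f₁ := by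
  set F₁ : MonoidAlgebra ℂ G := MonoidAlgebra.ofCoeff (Finsupp.equivFunOnFinite.symm f₁) with hF₁
  set F₂ : MonoidAlgebra ℂ G := MonoidAlgebra.ofCoeff (Finsupp.equivFunOnFinite.symm f₂) with hF₂
  have happ₁ : ∀ x, F₁.coeff x = f₁ x := fun x => by rw [hF₁]; simp
  have happ₂ : ∀ x, F₂.coeff x = f₂ x := fun x => by rw [hF₂]; simp
  have hbi : ∀ (F : MonoidAlgebra ℂ G) (f : G → ℂ), (∀ x, F.coeff x = f x) → BiInv H f →
      (∀ h ∈ H, MonoidAlgebra.single h 1 * F = F) ∧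
      (∀ h ∈ H, F * MonoidAlgebra.single h 1 = F) := by
    intro F f hFf hf
    constructor
    · intro h hh
      apply MonoidAlgebra.ext
      apply Finsupp.ext
      intro x
      rw [MonoidAlgebra.coeff_single_mul_apply, one_mul, hFf, hFf]
      have := hf h⁻¹ (inv_mem hh) 1 (one_mem H) x
      rwa [mul_one] at this
    · intro h hh
      apply MonoidAlgebra.ext
      apply Finsupp.ext
      intro x
      rw [MonoidAlgebra.coeff_mul_single_apply, mul_one, hFf, hFf]
      have := hf 1 (one_mem H) h⁻¹ (inv_mem hh) x
      rwa [one_mul] at this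
  have hcommF : F₁ * F₂ = F₂ * F₁ := by
    have h1 : (1 : MonoidAlgebra ℂ G) ∈
        (⨆ S : {m : Submodule (MonoidAlgebra ℂ G) (MonoidAlgebra ℂ G) |
              IsSimpleModule (MonoidAlgebra ℂ G) m},
          (S : Submodule (MonoidAlgebra ℂ G) (MonoidAlgebra ℂ G))) := by
      rw [← sSup_eq_iSup', IsSemisimpleModule.sSup_simples_eq_top]
      trivial
    have key : F₁ * (F₂ * 1) = F₂ * (F₁ * 1) := by
      refine Submodule.iSup_induction _ (motive := fun y => F₁ * (F₂ * y) = F₂ * (F₁ * y)) h1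
        (fun S y hy => ?_) (by simp) (fun a b ha hb => ?_)
      · exact key_comm H hmult F₁ F₂ ((hbi F₁ f₁ happ₁ hb₁).1) ((hbi F₁ f₁ happ₁ hb₁).2)
          ((hbi F₂ f₂ happ₂ hb₂).1) ((hbi F₂ f₂ happ₂ hb₂).2) S.1 S.2 y hy
      · simp only [mul_add, ha, hb]
    rwa [mul_one, mul_one] at key
  funext x
  show ∑ g : G, f₁ (x * g⁻¹) * f₂ g = ∑ g : G, f₂ (x * g⁻¹) * f₁ g
  calc ∑ g : G, f₁ (x * g⁻¹) * f₂ g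
      = (F₁ * F₂).coeff x := by
        rw [mul_apply_conv]
        exact Finset.sum_congr rfl (fun g _ => by rw [happ₁, happ₂])
    _ = (F₂ * F₁).coeff x := by rw [hcommF]
    _ = ∑ g : G, f₂ (x * g⁻¹) * f₁ g := by
        rw [mul_apply_conv]
        exact Finset.sum_congr rfl (fun g _ => by rw [happ₁, happ₂])

end Forward

end GelfandAux

/-- For a finite group `G` and a subgroup `H`, every irreducible complex
representation `ρ` of `G` satisfies `dim Hom_H(ρ|_H, ℂ) ≤ 1` if and only if the algebra
`ℂ[G]^{H×H}` of bi-`H`-invariant functions on `G` is commutative under convolution. -/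
theorem stmt0 {G : Type} [Group G] [Fintype G] (H : Subgroup G) :
    (∀ (V : Type) [AddCommGroup V] [Module ℂ V] (ρ : Representation ℂ G V),
        IsSimpleModule (MonoidAlgebra ℂ G) ρ.asModule →
        Module.rank ℂ (invFunctionals H ρ) ≤ 1) ↔
      (∀ f₁ f₂ : G → ℂ, BiInv H f₁ → BiInv H f₂ → conv f₁ f₂ = conv f₂ f₁) := by
  constructor
  · intro hmult f₁ f₂ h₁ h₂
    exact GelfandAux.comm_of_mult H hmult f₁ f₂ h₁ h₂
  · intro hcomm V _ _ ρ hsimp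
    exact GelfandAux.rank_le_one_of_comm H hcomm hsimp
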